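/- Let ℓ be nonnegative, nonincreasing and locally integrable on (0,∞), μ > 0, and let ρ₁ solve ρ₁ + μ (ℓ ⋆ ρ₁) = 1 with ρ₁(0) = 1, ρ₁ nonincreasing and absolutely continuous. Define ρ₂(t) = ∂_t (ℓ ⋆ ρ₁)(t). Then ρ₂(t) ≤ ℓ(t) ρ₁(t) for all t > 0. -/

import Mathlib

open MeasureTheory Set intervalIntegral Filter Topology

lemma ae_ne_point (b : ℝ) : ∀ᵐ x : ℝ, x ≠ b := by
  have : (volume : Measure ℝ) {b} = 0 := measure_singleton b
  rw [ae_iff]; simpa using this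

lemma my_integral_mono_Ioc {f g : ℝ → ℝ} {a b : ℝ} (hab : a ≤ b)
    (hf : IntervalIntegrable f volume a b) (hg : IntervalIntegrable g volume a b)
    (h : ∀ x ∈ Set.Ioc a b, f x ≤ g x) :
    (∫ x in a..b, f x) ≤ ∫ x in a..b, g x := by
  refine intervalIntegral.integral_mono_ae_restrict hab hf hg ?_
  rw [Filter.EventuallyLE, ae_restrict_iff' measurableSet_Icc]
  filter_upwards [ae_ne_point a] with x hx hmem
  exact h x ⟨lt_of_le_of_ne hmem.1 (Ne.symm hx), hmem.2⟩

lemma my_integral_congr_Ioo {f g : ℝ → ℝ} {a b : ℝ} (hab : a ≤ b)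
    (h : ∀ x ∈ Set.Ioo a b, f x = g x) :
    (∫ x in a..b, f x) = ∫ x in a..b, g x := by
  rw [intervalIntegral.integral_of_le hab, intervalIntegral.integral_of_le hab]
  apply setIntegral_congr_ae measurableSet_Ioc
  filter_upwards [ae_ne_point b] with x hx hmem
  exact h x ⟨hmem.1, lt_of_le_of_ne hmem.2 hx⟩

section Main

variable {ℓ ρ₁ : ℝ → ℝ} {μ : ℝ}

/-- interval integrability of ℓ on positive intervals -/
lemma hlI (hℓmono : AntitoneOn ℓ (Ioi 0)) {a b : ℝ} (ha : 0 < a) (hb : 0 < b) :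
    IntervalIntegrable ℓ volume a b :=
  (hℓmono.mono (fun x hx => lt_of_lt_of_le (lt_min ha hb) hx.1)).intervalIntegrable

/-- nonnegativity of ρ₁ -/
lemma rho_nonneg (hμ : 0 < μ)
    (hℓzero : ∀ x ≤ (0:ℝ), ℓ x = 0)
    (hℓ0 : ∀ x, 0 ≤ ℓ x)
    (hℓmono : AntitoneOn ℓ (Ioi 0))
    (hmℓ : Measurable ℓ)
    (hρ : Antitone ρ₁)
    (hρ₁0 : ρ₁ 0 = 1)
    (hvolt : ∀ t > (0:ℝ), ρ₁ t + μ * ∫ s in (0:ℝ)..t, ℓ (t - s) * ρ₁ s = 1) :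
    ∀ t, 0 ≤ t → 0 ≤ ρ₁ t := by
  have hρle1 : ∀ s, 0 ≤ s → ρ₁ s ≤ 1 := fun s hs => hρ₁0 ▸ hρ hs
  intro t ht0
  rcases eq_or_lt_of_le ht0 with h | ht
  · rw [← h, hρ₁0]; norm_num
  by_contra hc
  push_neg at hc
  set c := ρ₁ t with hcdef
  set r := 2 * t / (-c) with hrdef
  have hrpos : 0 < r := by
    apply div_pos (by linarith) (by linarith)
  set T := t + r with hTdef
  have htT : t < T := by simp [hTdef]; linarith
  have hT0 : 0 < T := by linarith
  have hvT := hvolt T hT0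
  have hρT : ρ₁ T ≤ c := hρ htT.le
  set I := ∫ s in (0:ℝ)..T, ℓ (T - s) * ρ₁ s with hIdef
  have hIpos : 0 < I := by nlinarith
  have hint : IntervalIntegrable (fun s => ℓ (T - s) * ρ₁ s) volume 0 T := by
    by_contra hni
    rw [hIdef, intervalIntegral.integral_undef hni] at hIpos
    exact lt_irrefl 0 hIpos
  have hint1 : IntervalIntegrable (fun s => ℓ (T - s) * ρ₁ s) volume 0 t :=
    hint.mono_set (Set.uIcc_subset_uIcc left_mem_uIcc (by rw [Set.uIcc_of_le hT0.le]; exact ⟨ht.le, htT.le⟩))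
  have hint2 : IntervalIntegrable (fun s => ℓ (T - s) * ρ₁ s) volume t T :=
    hint.mono_set (Set.uIcc_subset_uIcc (by rw [Set.uIcc_of_le hT0.le]; exact ⟨ht.le, htT.le⟩) right_mem_uIcc)
  -- ℓ (T - ·) integrable on [0,t]
  have hℓTs1 : IntervalIntegrable (fun s => ℓ (T - s)) volume 0 t := by
    have h1 := (hlI hℓmono hrpos hT0).comp_sub_left T
    have e1 : T - r = t := by rw [hTdef]; ring
    have e2 : T - T = 0 := by ring
    rw [e1, e2] at h1
    exact h1.symm
  -- bound on [0,t]
  have hb1 : (∫ s in (0:ℝ)..t, ℓ (T - s) * ρ₁ s) ≤ ∫ s in (0:ℝ)..t, ℓ (T - s) := by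
    apply intervalIntegral.integral_mono_on ht.le hint1 hℓTs1
    intro x hx
    have := hρle1 x hx.1
    nlinarith [hℓ0 (T - x)]
  have hv1 : (∫ s in (0:ℝ)..t, ℓ (T - s)) = ∫ x in r..T, ℓ x := by
    rw [intervalIntegral.integral_comp_sub_left ℓ T]
    congr 1 <;> rw [hTdef] <;> ring
  have hv1b : (∫ x in r..T, ℓ x) ≤ t * ℓ r := by
    have hrT : r ≤ T := by linarith
    have h1 : (∫ x in r..T, ℓ x) ≤ ∫ _x in r..T, ℓ r := by
      apply intervalIntegral.integral_mono_on hrT (hlI hℓmono hrpos hT0)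
        intervalIntegrable_const
      intro x hx
      exact hℓmono (Set.mem_Ioi.2 hrpos) (Set.mem_Ioi.2 (lt_of_lt_of_le hrpos hx.1)) hx.1
    rw [intervalIntegral.integral_const] at h1
    have e : T - r = t := by rw [hTdef]; ring
    rw [e] at h1
    simpa using h1
  -- ℓ (T - ·) integrable on [t,T]
  have hℓTs2 : IntervalIntegrable (fun s => ℓ (T - s)) volume t T := by
    apply IntervalIntegrable.mono_fun' (g := fun s => (-c)⁻¹ * (ℓ (T - s) * (-ρ₁ s)))
    · have : IntervalIntegrable (fun s => ℓ (T - s) * (-ρ₁ s)) volume t T := by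
        simpa [Pi.neg_def] using hint2.neg
      exact this.const_mul _
    · exact ((hmℓ.comp (measurable_const.sub measurable_id)).aestronglyMeasurable)
    · rw [Filter.EventuallyLE, ae_restrict_iff' measurableSet_uIoc]
      apply Filter.Eventually.of_forall
      intro x hx
      rw [Set.uIoc_of_le htT.le] at hx
      have hρx : ρ₁ x ≤ c := hρ hx.1.le
      have hl := hℓ0 (T - x)
      have key : ℓ (T - x) ≤ (-c)⁻¹ * (ℓ (T - x) * (-ρ₁ x)) := by
        rw [show ((-c)⁻¹ * (ℓ (T - x) * (-ρ₁ x))) = (ℓ (T - x) * (-ρ₁ x)) / (-c) by ring,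
          le_div_iff₀ (by linarith)]
        nlinarith
      simpa [Real.norm_of_nonneg hl] using key
  -- ℓ integrable on [0,r]
  have hℓ0r : IntervalIntegrable ℓ volume 0 r := by
    have h2 := hℓTs2.comp_sub_left T
    simp only [sub_sub_cancel] at h2
    have e1 : T - t = r := by rw [hTdef]; ring
    rw [e1, sub_self] at h2
    exact h2.symm
  have hlow : r * ℓ r ≤ ∫ x in (0:ℝ)..r, ℓ x := by
    have h3 := my_integral_mono_Ioc hrpos.le (_root_.intervalIntegrable_const (c := ℓ r)) hℓ0r
      (fun x hx => hℓmono (Set.mem_Ioi.2 hx.1) (Set.mem_Ioi.2 hrpos) hx.2)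
    rw [intervalIntegral.integral_const] at h3
    simpa using h3
  have hb2 : (∫ s in t..T, ℓ (T - s) * ρ₁ s) ≤ c * ∫ x in (0:ℝ)..r, ℓ x := by
    have step1 : (∫ s in t..T, ℓ (T - s) * ρ₁ s) ≤ ∫ s in t..T, c * ℓ (T - s) := by
      apply intervalIntegral.integral_mono_on htT.le hint2 (hℓTs2.const_mul c)
      intro x hx
      have hρx : ρ₁ x ≤ c := hρ hx.1
      calc ℓ (T - x) * ρ₁ x ≤ ℓ (T - x) * c := by
            exact mul_le_mul_of_nonneg_left hρx (hℓ0 _)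
        _ = c * ℓ (T - x) := by ring
    have step2 : (∫ s in t..T, c * ℓ (T - s)) = c * ∫ x in (0:ℝ)..r, ℓ x := by
      rw [intervalIntegral.integral_const_mul, intervalIntegral.integral_comp_sub_left ℓ T]
      congr 2
      · rw [sub_self]
      · rw [hTdef]; ring
    linarith [step1, step2.le, step2.ge]
  have hsplit : (∫ s in (0:ℝ)..t, ℓ (T - s) * ρ₁ s) + (∫ s in t..T, ℓ (T - s) * ρ₁ s) = I :=
    intervalIntegral.integral_add_adjacent_intervals hint1 hint2
  have hcr : c * r = -(2 * t) := by
    rw [hrdef]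
    field_simp
    rw [div_self (ne_of_lt hc)]
  have hcup : c * ∫ x in (0:ℝ)..r, ℓ x ≤ c * (r * ℓ r) :=
    mul_le_mul_of_nonpos_left hlow hc.le
  have hI0 : I ≤ 0 := by nlinarith [hℓ0 r]
  nlinarith [mul_nonneg hμ.le (neg_nonneg.2 hI0)]


lemma key_diff (hℓ0 : ∀ x, 0 ≤ ℓ x) (hℓmono : AntitoneOn ℓ (Ioi 0)) (hmℓ : Measurable ℓ)
    (hρ : Antitone ρ₁) (hρ₁0 : ρ₁ 0 = 1) (hρnn : ∀ s, 0 ≤ s → 0 ≤ ρ₁ s)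
    (hLb : ∀ b : ℝ, 0 < b → IntervalIntegrable ℓ volume 0 b)
    {t h : ℝ} (ht : 0 < t) (hh : 0 < h) (hht : h ≤ t) :
    (∫ s in (0:ℝ)..(t+h), ℓ ((t+h) - s) * ρ₁ s) - (∫ s in (0:ℝ)..t, ℓ (t - s) * ρ₁ s)
      ≤ h * (ℓ t * (ρ₁ t + 1 - ρ₁ h)) := by
  have hρle1 : ∀ s, 0 ≤ s → ρ₁ s ≤ 1 := fun s hs => hρ₁0 ▸ hρ hs
  have mρ : Measurable ρ₁ := hρ.measurable
  have e1 : (∫ s in (0:ℝ)..(t+h), ℓ ((t+h) - s) * ρ₁ s)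
      = ∫ x in (0:ℝ)..(t+h), ℓ x * ρ₁ ((t+h) - x) := by
    have h1 := intervalIntegral.integral_comp_sub_left (a := (0:ℝ)) (b := t+h)
      (fun x => ℓ x * ρ₁ ((t+h) - x)) (t+h)
    simp only [sub_sub_cancel, sub_self, sub_zero] at h1
    exact h1
  have e2 : (∫ s in (0:ℝ)..t, ℓ (t - s) * ρ₁ s)
      = ∫ x in (0:ℝ)..t, ℓ x * ρ₁ (t - x) := by
    have h1 := intervalIntegral.integral_comp_sub_left (a := (0:ℝ)) (b := t)
      (fun x => ℓ x * ρ₁ (t - x)) t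
    simp only [sub_sub_cancel, sub_self, sub_zero] at h1
    exact h1
  have mk : ∀ c : ℝ, 0 ≤ c → IntervalIntegrable (fun x => ℓ x * ρ₁ (c - x)) volume 0 c := by
    intro c hc
    rcases eq_or_lt_of_le hc with hc0 | hc0
    · rw [← hc0]
    have hm2 : Measurable fun x : ℝ => ℓ x * ρ₁ (c - x) :=
      hmℓ.mul (mρ.comp (measurable_const.sub measurable_id))
    apply IntervalIntegrable.mono_fun' (hLb c hc0) hm2.aestronglyMeasurable
    rw [Filter.EventuallyLE, ae_restrict_iff' measurableSet_uIoc]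
    apply Filter.Eventually.of_forall
    intro x hx
    rw [Set.uIoc_of_le hc] at hx
    have h1 : 0 ≤ ρ₁ (c - x) := hρnn _ (by linarith [hx.2])
    have h2 : ρ₁ (c - x) ≤ 1 := hρle1 _ (by linarith [hx.2])
    rw [Real.norm_eq_abs, abs_mul, abs_of_nonneg (hℓ0 x), abs_of_nonneg h1]
    nlinarith [hℓ0 x]
  have Ia : IntervalIntegrable (fun x => ℓ x * ρ₁ ((t+h) - x)) volume 0 (t+h) :=
    mk (t+h) (by linarith)
  have Ia1 : IntervalIntegrable (fun x => ℓ x * ρ₁ ((t+h) - x)) volume 0 t :=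
    Ia.mono_set (Set.uIcc_subset_uIcc left_mem_uIcc
      (by rw [Set.uIcc_of_le (by linarith : (0:ℝ) ≤ t+h)]; exact ⟨ht.le, by linarith⟩))
  have Ia2 : IntervalIntegrable (fun x => ℓ x * ρ₁ ((t+h) - x)) volume t (t+h) :=
    Ia.mono_set (Set.uIcc_subset_uIcc
      (by rw [Set.uIcc_of_le (by linarith : (0:ℝ) ≤ t+h)]; exact ⟨ht.le, by linarith⟩)
      right_mem_uIcc)
  have Ib : IntervalIntegrable (fun x => ℓ x * ρ₁ (t - x)) volume 0 t := mk t ht.le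
  have Iρa : IntervalIntegrable (fun x => ρ₁ ((t+h) - x)) volume 0 t :=
    Monotone.intervalIntegrable (fun a b hab => hρ (by linarith))
  have Iρb : IntervalIntegrable (fun x => ρ₁ (t - x)) volume 0 t :=
    Monotone.intervalIntegrable (fun a b hab => hρ (by linarith))
  have hsplit : (∫ x in (0:ℝ)..(t+h), ℓ x * ρ₁ ((t+h) - x))
      = (∫ x in (0:ℝ)..t, ℓ x * ρ₁ ((t+h) - x)) + ∫ x in t..(t+h), ℓ x * ρ₁ ((t+h) - x) :=
    (intervalIntegral.integral_add_adjacent_intervals Ia1 Ia2).symm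
  have hA1 : (∫ x in (0:ℝ)..t, ℓ x * ρ₁ ((t+h) - x)) - (∫ x in (0:ℝ)..t, ℓ x * ρ₁ (t - x))
      ≤ ℓ t * ((∫ x in (0:ℝ)..t, ρ₁ ((t+h) - x)) - ∫ x in (0:ℝ)..t, ρ₁ (t - x)) := by
    rw [← intervalIntegral.integral_sub Ia1 Ib, ← intervalIntegral.integral_sub Iρa Iρb,
      ← intervalIntegral.integral_const_mul]
    apply my_integral_mono_Ioc ht.le (Ia1.sub Ib) ((Iρa.sub Iρb).const_mul _)
    intro x hx
    have hΔ : ρ₁ ((t+h) - x) ≤ ρ₁ (t - x) := hρ (by linarith)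
    have hlt : ℓ t ≤ ℓ x := hℓmono (mem_Ioi.2 hx.1) (mem_Ioi.2 ht) hx.2
    nlinarith [mul_nonneg (sub_nonneg.2 hlt) (sub_nonneg.2 hΔ)]
  have v1 : (∫ x in (0:ℝ)..t, ρ₁ ((t+h) - x)) = ∫ u in h..(t+h), ρ₁ u := by
    rw [intervalIntegral.integral_comp_sub_left ρ₁ (t+h)]
    have : t + h - t = h := by ring
    rw [this, sub_zero]
  have v2 : (∫ x in (0:ℝ)..t, ρ₁ (t - x)) = ∫ u in (0:ℝ)..t, ρ₁ u := by
    rw [intervalIntegral.integral_comp_sub_left ρ₁ t, sub_self, sub_zero]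
  have hρint : ∀ a b : ℝ, IntervalIntegrable ρ₁ volume a b := fun a b => hρ.intervalIntegrable
  have v3 : (∫ u in h..(t+h), ρ₁ u) - ∫ u in (0:ℝ)..t, ρ₁ u
      = (∫ u in t..(t+h), ρ₁ u) - ∫ u in (0:ℝ)..h, ρ₁ u := by
    have d1 : (∫ u in h..t, ρ₁ u) + (∫ u in t..(t+h), ρ₁ u) = ∫ u in h..(t+h), ρ₁ u :=
      intervalIntegral.integral_add_adjacent_intervals (hρint _ _) (hρint _ _)
    have d2 : (∫ u in (0:ℝ)..h, ρ₁ u) + (∫ u in h..t, ρ₁ u) = ∫ u in (0:ℝ)..t, ρ₁ u :=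
      intervalIntegral.integral_add_adjacent_intervals (hρint _ _) (hρint _ _)
    linarith
  have v4 : (∫ u in t..(t+h), ρ₁ u) ≤ h * ρ₁ t := by
    have h4 := intervalIntegral.integral_mono_on (by linarith : t ≤ t + h) (hρint _ _)
      (_root_.intervalIntegrable_const (c := ρ₁ t)) (fun x hx => hρ hx.1)
    rw [intervalIntegral.integral_const] at h4
    simpa using h4
  have v5 : h * ρ₁ h ≤ ∫ u in (0:ℝ)..h, ρ₁ u := by
    have h5 := intervalIntegral.integral_mono_on hh.le
      (_root_.intervalIntegrable_const (c := ρ₁ h)) (hρint _ _) (fun x hx => hρ hx.2)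
    rw [intervalIntegral.integral_const] at h5
    simpa using h5
  have hA2 : (∫ x in t..(t+h), ℓ x * ρ₁ ((t+h) - x)) ≤ h * ℓ t := by
    have h6 := intervalIntegral.integral_mono_on (by linarith : t ≤ t + h) Ia2
      (_root_.intervalIntegrable_const (c := ℓ t)) ?_
    · rw [intervalIntegral.integral_const] at h6
      simpa using h6
    · intro x hx
      have hx0 : 0 < x := lt_of_lt_of_le ht hx.1
      have h1 : 0 ≤ ρ₁ ((t+h) - x) := hρnn _ (by linarith [hx.2])
      have h2 : ρ₁ ((t+h) - x) ≤ 1 := hρle1 _ (by linarith [hx.2])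
      have hlt : ℓ x ≤ ℓ t := hℓmono (mem_Ioi.2 ht) (mem_Ioi.2 hx0) hx.1
      nlinarith [hℓ0 x]
  have hbr : (∫ x in (0:ℝ)..t, ρ₁ ((t+h) - x)) - (∫ x in (0:ℝ)..t, ρ₁ (t - x))
      ≤ h * ρ₁ t - h * ρ₁ h := by
    rw [v1, v2]; linarith
  have hA1' : (∫ x in (0:ℝ)..t, ℓ x * ρ₁ ((t+h) - x)) - (∫ x in (0:ℝ)..t, ℓ x * ρ₁ (t - x))
      ≤ ℓ t * (h * ρ₁ t - h * ρ₁ h) :=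
    le_trans hA1 (mul_le_mul_of_nonneg_left hbr (hℓ0 t))
  rw [e1, e2, hsplit]
  have hr : h * (ℓ t * (ρ₁ t + 1 - ρ₁ h)) = ℓ t * (h * ρ₁ t - h * ρ₁ h) + h * ℓ t := by ring
  linarith


lemma caseA (hμ : 0 < μ)
    (hℓzero : ∀ x ≤ (0:ℝ), ℓ x = 0) (hℓ0 : ∀ x, 0 ≤ ℓ x)
    (hℓmono : AntitoneOn ℓ (Ioi 0)) (hmℓ : Measurable ℓ)
    (hρ : Antitone ρ₁) (hρ₁0 : ρ₁ 0 = 1)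
    (hvolt : ∀ t > (0:ℝ), ρ₁ t + μ * ∫ s in (0:ℝ)..t, ℓ (t - s) * ρ₁ s = 1)
    (hA : IntegrableOn ℓ (Ioc 0 1)) :
    ∀ t > (0:ℝ), deriv (fun r => ∫ s in (0:ℝ)..r, ℓ (r - s) * ρ₁ s) t ≤ ℓ t * ρ₁ t := by
  have hρnn : ∀ s, 0 ≤ s → 0 ≤ ρ₁ s :=
    rho_nonneg hμ hℓzero hℓ0 hℓmono hmℓ hρ hρ₁0 hvolt
  have hρle1 : ∀ s, 0 ≤ s → ρ₁ s ≤ 1 := fun s hs => hρ₁0 ▸ hρ hs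
  have mρ : Measurable ρ₁ := hρ.measurable
  have hLb : ∀ b : ℝ, 0 < b → IntervalIntegrable ℓ volume 0 b := by
    intro b hb
    rw [intervalIntegrable_iff_integrableOn_Ioc_of_le hb.le]
    rcases le_or_gt b 1 with h1 | h1
    · exact hA.mono_set (Ioc_subset_Ioc le_rfl h1)
    · have h2 : IntegrableOn ℓ (Ioc 1 b) := by
        have h3 := hlI hℓmono one_pos (lt_trans one_pos h1)
        rwa [intervalIntegrable_iff_integrableOn_Ioc_of_le h1.le] at h3
      rw [← Ioc_union_Ioc_eq_Ioc (zero_le_one) h1.le]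
      exact hA.union h2
  set J : ℝ → ℝ := fun r => ∫ s in (0:ℝ)..r, ℓ (r - s) * ρ₁ s with hJ
  -- continuity of ρ₁ at 0 from the right
  have cont0 : Tendsto ρ₁ (𝓝[>] (0:ℝ)) (𝓝 1) := by
    set F : ℝ → ℝ := fun x => ∫ u in Ioc (0:ℝ) x, ℓ u with hF
    have hIcc : IntegrableOn ℓ (Icc 0 1) := by
      rw [integrableOn_Icc_iff_integrableOn_Ioc]; exact hA
    have hFc : ContinuousOn F (Icc 0 1) := continuousOn_primitive hIcc
    have hF0 : Tendsto F (𝓝[>] (0:ℝ)) (𝓝 0) := by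
      have h0 : F 0 = 0 := by simp [hF]
      have h1 := hFc 0 (left_mem_Icc.2 zero_le_one)
      rw [ContinuousWithinAt, h0] at h1
      refine h1.mono_left ?_
      rw [← nhdsWithin_Ioc_eq_nhdsGT (zero_lt_one (α := ℝ))]
      exact nhdsWithin_mono 0 Ioc_subset_Icc_self
    have hbounds : ∀ᶠ h in 𝓝[>] (0:ℝ), (1 - μ * F h ≤ ρ₁ h ∧ ρ₁ h ≤ 1) := by
      filter_upwards [Ioo_mem_nhdsGT_of_mem (Set.left_mem_Ico.2 zero_lt_one)] with h hh
      have hh0 : 0 < h := hh.1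
      constructor
      · have hv := hvolt h hh0
        have hℓh : IntervalIntegrable (fun s => ℓ (h - s)) volume 0 h := by
          have h2 := (hLb h hh0).comp_sub_left h
          rw [sub_self, sub_zero] at h2
          exact h2.symm
        have gi : IntervalIntegrable (fun s => ℓ (h - s) * ρ₁ s) volume 0 h := by
          have hm2 : Measurable fun s : ℝ => ℓ (h - s) * ρ₁ s :=
            (hmℓ.comp (measurable_const.sub measurable_id)).mul mρ
          apply IntervalIntegrable.mono_fun' hℓh hm2.aestronglyMeasurable
          rw [Filter.EventuallyLE, ae_restrict_iff' measurableSet_uIoc]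
          apply Filter.Eventually.of_forall
          intro x hx
          rw [Set.uIoc_of_le hh0.le] at hx
          have h1 : 0 ≤ ρ₁ x := hρnn x hx.1.le
          have h2 : ρ₁ x ≤ 1 := hρle1 x hx.1.le
          rw [Real.norm_eq_abs, abs_mul, abs_of_nonneg (hℓ0 _), abs_of_nonneg h1]
          nlinarith [hℓ0 (h - x)]
        have hup : (∫ s in (0:ℝ)..h, ℓ (h - s) * ρ₁ s) ≤ F h := by
          have hle : (∫ s in (0:ℝ)..h, ℓ (h - s) * ρ₁ s) ≤ ∫ s in (0:ℝ)..h, ℓ (h - s) := by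
            apply intervalIntegral.integral_mono_on hh0.le gi hℓh
            intro x hx
            nlinarith [hℓ0 (h - x), hρnn x hx.1, hρle1 x hx.1]
          have heq : (∫ s in (0:ℝ)..h, ℓ (h - s)) = F h := by
            rw [intervalIntegral.integral_comp_sub_left ℓ h, sub_self, sub_zero,
              intervalIntegral.integral_of_le hh0.le]
          linarith
        have := mul_le_mul_of_nonneg_left hup hμ.le
        linarith
      · exact hρle1 h hh0.le
    have htop : Tendsto (fun h => 1 - μ * F h) (𝓝[>] (0:ℝ)) (𝓝 1) := by
      have h1 : Tendsto (fun h => 1 - μ * F h) (𝓝[>] (0:ℝ)) (𝓝 (1 - μ * 0)) :=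
        tendsto_const_nhds.sub ((hF0.const_mul μ))
      simpa using h1
    exact tendsto_of_tendsto_of_tendsto_of_le_of_le' htop tendsto_const_nhds
      (hbounds.mono fun x hx => hx.1) (hbounds.mono fun x hx => hx.2)
  intro t ht
  by_cases hd : DifferentiableAt ℝ J t
  · have hder : Tendsto (slope J t) (𝓝[≠] t) (𝓝 (deriv J t)) :=
      hasDerivAt_iff_tendsto_slope.1 hd.hasDerivAt
    have hder' : Tendsto (slope J t) (𝓝[>] t) (𝓝 (deriv J t)) :=
      hder.mono_left (nhdsWithin_mono t (fun x hx => Set.mem_compl_singleton_iff.2 (ne_of_gt hx)))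
    have hshift : Tendsto (fun u => u - t) (𝓝[>] t) (𝓝[>] (0:ℝ)) := by
      apply tendsto_nhdsWithin_of_tendsto_nhds_of_eventually_within
      · have h1 : Tendsto (fun u : ℝ => u - t) (𝓝 t) (𝓝 (t - t)) :=
          (continuous_id.sub continuous_const).tendsto t
        rw [sub_self] at h1
        exact h1.mono_left nhdsWithin_le_nhds
      · filter_upwards [self_mem_nhdsWithin] with u hu
        exact mem_Ioi.2 (sub_pos.2 (mem_Ioi.1 hu))
    have hlim : Tendsto (fun u => ℓ t * (ρ₁ t + 1 - ρ₁ (u - t))) (𝓝[>] t) (𝓝 (ℓ t * ρ₁ t)) := by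
      have h1 : Tendsto (fun u => ρ₁ (u - t)) (𝓝[>] t) (𝓝 1) := cont0.comp hshift
      have h2 : Tendsto (fun u => ℓ t * (ρ₁ t + 1 - ρ₁ (u - t))) (𝓝[>] t)
          (𝓝 (ℓ t * (ρ₁ t + 1 - 1))) := (tendsto_const_nhds.sub h1).const_mul _
      have h3 : ρ₁ t + 1 - 1 = ρ₁ t := by ring
      rwa [h3] at h2
    have hbnd : ∀ᶠ u in 𝓝[>] t, slope J t u ≤ ℓ t * (ρ₁ t + 1 - ρ₁ (u - t)) := by
      filter_upwards [Ioo_mem_nhdsGT_of_mem (Set.left_mem_Ico.2 (by linarith : t < t + t))]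
        with u hu
      have hh : 0 < u - t := sub_pos.2 hu.1
      have hht : u - t ≤ t := by linarith [hu.2.le]
      have hk := key_diff hℓ0 hℓmono hmℓ hρ hρ₁0 hρnn hLb ht hh hht
      rw [show t + (u - t) = u by ring] at hk
      rw [slope_def_field, div_le_iff₀ hh]
      calc J u - J t ≤ (u - t) * (ℓ t * (ρ₁ t + 1 - ρ₁ (u - t))) := hk
        _ = ℓ t * (ρ₁ t + 1 - ρ₁ (u - t)) * (u - t) := by ring
    exact le_of_tendsto_of_tendsto hder' hlim hbnd
  · rw [deriv_zero_of_not_differentiableAt hd]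
    exact mul_nonneg (hℓ0 t) (hρnn t ht.le)


lemma caseB (hμ : 0 < μ)
    (hℓzero : ∀ x ≤ (0:ℝ), ℓ x = 0) (hℓ0 : ∀ x, 0 ≤ ℓ x)
    (hℓmono : AntitoneOn ℓ (Ioi 0)) (hmℓ : Measurable ℓ)
    (hρ : Antitone ρ₁) (hρ₁0 : ρ₁ 0 = 1)
    (hvolt : ∀ t > (0:ℝ), ρ₁ t + μ * ∫ s in (0:ℝ)..t, ℓ (t - s) * ρ₁ s = 1)
    (hB : ¬ IntegrableOn ℓ (Ioc 0 1)) :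
    ∀ t > (0:ℝ), deriv (fun r => ∫ s in (0:ℝ)..r, ℓ (r - s) * ρ₁ s) t ≤ ℓ t * ρ₁ t := by
  have hρnn : ∀ s, 0 ≤ s → 0 ≤ ρ₁ s :=
    rho_nonneg hμ hℓzero hℓ0 hℓmono hmℓ hρ hρ₁0 hvolt
  have hρle1 : ∀ s, 0 ≤ s → ρ₁ s ≤ 1 := fun s hs => hρ₁0 ▸ hρ hs
  have mρ : Measurable ρ₁ := hρ.measurable
  have F1 : ∀ c : ℝ, 0 < c → ¬ IntegrableOn ℓ (Ioc 0 c) := by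
    intro c hc hcon
    apply hB
    rcases le_or_gt 1 c with h1 | h1
    · exact hcon.mono_set (Ioc_subset_Ioc le_rfl h1)
    · have h2 : IntegrableOn ℓ (Ioc c 1) := by
        have h3 := hlI hℓmono hc one_pos
        rwa [intervalIntegrable_iff_integrableOn_Ioc_of_le h1.le] at h3
      rw [← Ioc_union_Ioc_eq_Ioc hc.le h1.le]
      exact hcon.union h2
  have F2 : ∀ t : ℝ, 0 < t → ρ₁ t = 1 ∨ ρ₁ t = 0 := by
    intro t ht
    rcases eq_or_lt_of_le (hρnn t ht.le) with h | h
    · right; exact h.symm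
    · left
      have hni : ¬ IntervalIntegrable (fun s => ℓ (t - s) * ρ₁ s) volume 0 t := by
        intro hcon
        have hstep : IntervalIntegrable (fun s => ℓ (t - s)) volume 0 t := by
          apply IntervalIntegrable.mono_fun' (hcon.const_mul (ρ₁ t)⁻¹)
            ((hmℓ.comp (measurable_const.sub measurable_id)).aestronglyMeasurable)
          rw [Filter.EventuallyLE, ae_restrict_iff' measurableSet_uIoc]
          apply Filter.Eventually.of_forall
          intro x hx
          rw [Set.uIoc_of_le ht.le] at hx
          have hρx : ρ₁ t ≤ ρ₁ x := hρ hx.2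
          have hl := hℓ0 (t - x)
          show ‖ℓ (t - x)‖ ≤ (ρ₁ t)⁻¹ * (ℓ (t - x) * ρ₁ x)
          rw [Real.norm_of_nonneg hl]
          rw [show (ρ₁ t)⁻¹ * (ℓ (t - x) * ρ₁ x) = (ℓ (t - x) * ρ₁ x) / (ρ₁ t) by ring,
            le_div_iff₀ h]
          nlinarith
        have hflip : IntervalIntegrable ℓ volume 0 t := by
          have h2 := hstep.comp_sub_left t
          simp only [sub_sub_cancel] at h2
          rw [sub_zero, sub_self] at h2
          exact h2.symm
        rw [intervalIntegrable_iff_integrableOn_Ioc_of_le ht.le] at hflip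
        exact F1 t ht hflip
      have hv := hvolt t ht
      rw [intervalIntegral.integral_undef hni] at hv
      linarith
  by_cases hall : ∀ u : ℝ, 0 < u → ρ₁ u = 1
  · intro t ht
    have hJ0 : Set.EqOn (fun r => ∫ s in (0:ℝ)..r, ℓ (r - s) * ρ₁ s) (fun _ => (0:ℝ)) (Ioi 0) := by
      intro r hr
      have hv := hvolt r hr
      rw [hall r hr] at hv
      have h1 : μ * ∫ s in (0:ℝ)..r, ℓ (r - s) * ρ₁ s = 0 := by linarith
      simp only
      exact (mul_eq_zero.1 h1).resolve_left (ne_of_gt hμ)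
    have hdz : deriv (fun r => ∫ s in (0:ℝ)..r, ℓ (r - s) * ρ₁ s) t = 0 := by
      have he : (fun r => ∫ s in (0:ℝ)..r, ℓ (r - s) * ρ₁ s) =ᶠ[𝓝 t] (fun _ => (0:ℝ)) :=
        eventuallyEq_of_mem (isOpen_Ioi.mem_nhds ht) hJ0
      rw [he.deriv_eq, deriv_const]
    rw [hdz, hall t ht, mul_one]
    exact hℓ0 t
  · exfalso
    push_neg at hall
    obtain ⟨t₀, ht₀, hne⟩ := hall
    have ht₀0 : ρ₁ t₀ = 0 := (F2 t₀ ht₀).resolve_left hne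
    have hSne : Set.Nonempty {u : ℝ | 0 < u ∧ ρ₁ u = 0} := ⟨t₀, ht₀, ht₀0⟩
    have hSbd : BddBelow {u : ℝ | 0 < u ∧ ρ₁ u = 0} := ⟨0, fun x hx => hx.1.le⟩
    set c := sInf {u : ℝ | 0 < u ∧ ρ₁ u = 0} with hcdef
    have hc0 : 0 ≤ c := le_csInf hSne (fun x hx => hx.1.le)
    have P1 : ∀ u : ℝ, c < u → ρ₁ u = 0 := by
      intro u hu
      obtain ⟨v, hvS, hvu⟩ := exists_lt_of_csInf_lt hSne hu
      have h1 : ρ₁ u ≤ 0 := hvS.2 ▸ hρ hvu.le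
      have h2 : 0 ≤ ρ₁ u := hρnn u (lt_trans hvS.1 hvu).le
      linarith
    have P2 : ∀ u : ℝ, 0 < u → u < c → ρ₁ u = 1 := by
      intro u hu huc
      rcases F2 u hu with h | h
      · exact h
      · exact absurd (csInf_le hSbd ⟨hu, h⟩) (not_le.2 huc)
    have KEY : ∀ ε : ℝ, 0 < ε →
        IntegrableOn ℓ (Ioc ε (c + ε)) ∧ (∫ x in Ioc ε (c + ε), ℓ x) = 1/μ := by
      intro ε hε
      have htpos : 0 < c + ε := by linarith
      have hρt : ρ₁ (c + ε) = 0 := P1 _ (by linarith)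
      have hv := hvolt (c + ε) htpos
      rw [hρt, zero_add] at hv
      have hJval : (∫ s in (0:ℝ)..(c+ε), ℓ ((c+ε) - s) * ρ₁ s) = 1/μ := by
        rw [eq_div_iff (ne_of_gt hμ)]; linarith
      have hgi : IntervalIntegrable (fun s => ℓ ((c+ε) - s) * ρ₁ s) volume 0 (c+ε) := by
        by_contra hni
        rw [intervalIntegral.integral_undef hni] at hJval
        have := one_div_pos.2 hμ
        linarith
      have hmemc : c ∈ Set.uIcc (0:ℝ) (c+ε) := by
        rw [Set.uIcc_of_le htpos.le]; exact ⟨hc0, by linarith⟩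
      have hgi1 : IntervalIntegrable (fun s => ℓ ((c+ε) - s) * ρ₁ s) volume 0 c :=
        hgi.mono_set (Set.uIcc_subset_uIcc left_mem_uIcc hmemc)
      have hgi2 : IntervalIntegrable (fun s => ℓ ((c+ε) - s) * ρ₁ s) volume c (c+ε) :=
        hgi.mono_set (Set.uIcc_subset_uIcc hmemc right_mem_uIcc)
      have h2nd : (∫ s in c..(c+ε), ℓ ((c+ε) - s) * ρ₁ s) = 0 := by
        have hle : ∀ x ∈ Set.Ioc c (c+ε), ℓ ((c+ε) - x) * ρ₁ x = 0 := by
          intro x hx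
          rw [P1 x hx.1, mul_zero]
        have h1 := my_integral_mono_Ioc (by linarith : c ≤ c + ε) hgi2
          (_root_.intervalIntegrable_const (c := (0:ℝ))) (fun x hx => (hle x hx).le)
        have h2 := my_integral_mono_Ioc (by linarith : c ≤ c + ε)
          (_root_.intervalIntegrable_const (c := (0:ℝ))) hgi2 (fun x hx => (hle x hx).ge)
        simp only [intervalIntegral.integral_const, smul_zero] at h1 h2
        linarith
      have h1st : (∫ s in (0:ℝ)..c, ℓ ((c+ε) - s) * ρ₁ s) = ∫ s in (0:ℝ)..c, ℓ ((c+ε) - s) :=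
        my_integral_congr_Ioo hc0 (fun x hx => by rw [P2 x hx.1 hx.2, mul_one])
      have hsplit := intervalIntegral.integral_add_adjacent_intervals hgi1 hgi2
      have hval : (∫ s in (0:ℝ)..c, ℓ ((c+ε) - s)) = 1/μ := by
        rw [← h1st]; linarith
      have hℓc : IntervalIntegrable (fun s => ℓ ((c+ε) - s)) volume 0 c := by
        apply IntervalIntegrable.mono_fun' hgi1
          ((hmℓ.comp (measurable_const.sub measurable_id)).aestronglyMeasurable)
        rw [Filter.EventuallyLE, ae_restrict_iff' measurableSet_uIoc]
        filter_upwards [ae_ne_point c] with x hxc hx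
        rw [Set.uIoc_of_le hc0] at hx
        have hxlt : x < c := lt_of_le_of_ne hx.2 hxc
        show ‖ℓ (c + ε - x)‖ ≤ ℓ (c + ε - x) * ρ₁ x
        rw [P2 x hx.1 hxlt, mul_one, Real.norm_of_nonneg (hℓ0 _)]
      have hint : IntervalIntegrable ℓ volume ε (c+ε) := by
        have h2 := hℓc.comp_sub_left (c+ε)
        simp only [sub_sub_cancel] at h2
        rw [sub_zero, show c + ε - c = ε by ring] at h2
        exact h2.symm
      have hvalI : (∫ x in ε..(c+ε), ℓ x) = 1/μ := by
        rw [intervalIntegral.integral_comp_sub_left ℓ (c+ε)] at hval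
        rw [sub_zero, show c + ε - c = ε by ring] at hval
        exact hval
      refine ⟨(intervalIntegrable_iff_integrableOn_Ioc_of_le (by linarith)).1 hint, ?_⟩
      rw [← intervalIntegral.integral_of_le (by linarith : ε ≤ c + ε)]
      exact hvalI
    rcases eq_or_lt_of_le hc0 with hceq | hcpos
    · obtain ⟨_, hveq⟩ := KEY 1 one_pos
      rw [← hceq, zero_add] at hveq
      simp only [Set.Ioc_self, Measure.restrict_empty, integral_zero_measure] at hveq
      have := one_div_pos.2 hμ
      linarith
    · have hb : ∀ ε : ℝ, 0 < ε → ε < c →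
          (∫⁻ x in Ioc ε c, ENNReal.ofReal (ℓ x)) ≤ ENNReal.ofReal (1/μ) := by
        intro ε hε hεc
        obtain ⟨hint, hval⟩ := KEY ε hε
        have hsub : IntegrableOn ℓ (Ioc ε c) :=
          hint.mono_set (Ioc_subset_Ioc le_rfl (by linarith))
        have hreal : (∫ x in Ioc ε c, ℓ x) ≤ 1/μ := by
          rw [← hval]
          exact setIntegral_mono_set hint (Filter.Eventually.of_forall fun x => hℓ0 x)
            ((Ioc_subset_Ioc le_rfl (by linarith : c ≤ c + ε)).eventuallyLE)
        calc (∫⁻ x in Ioc ε c, ENNReal.ofReal (ℓ x))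
            = ENNReal.ofReal (∫ x in Ioc ε c, ℓ x) :=
              (ofReal_integral_eq_lintegral_ofReal hsub
                (Filter.Eventually.of_forall fun x => hℓ0 x)).symm
          _ ≤ ENNReal.ofReal (1/μ) := ENNReal.ofReal_le_ofReal hreal
      set f : ℕ → ℝ → ENNReal :=
        fun n => (Ioc (c / (n+2)) c).indicator (fun x => ENNReal.ofReal (ℓ x)) with hfdef
      have hfm : ∀ n, AEMeasurable (f n) volume := fun n =>
        ((ENNReal.measurable_ofReal.comp hmℓ).indicator measurableSet_Ioc).aemeasurable
      have hmono : ∀ᵐ x : ℝ, Monotone fun n => f n x := by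
        apply Filter.Eventually.of_forall
        intro x n m hnm
        have hcast : ((n:ℝ) + 2) ≤ ((m:ℝ) + 2) := by
          have := (Nat.cast_le (α := ℝ)).2 hnm
          linarith
        have hdiv : c / ((m:ℝ) + 2) ≤ c / ((n:ℝ) + 2) :=
          div_le_div_of_nonneg_left hc0 (by positivity) hcast
        exact Set.indicator_le_indicator_of_subset
          (Ioc_subset_Ioc hdiv le_rfl) (fun _ => zero_le) x
      have hsup : ∀ x : ℝ, (⨆ n, f n x) = (Ioc (0:ℝ) c).indicator (fun x => ENNReal.ofReal (ℓ x)) x := by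
        intro x
        by_cases hx : x ∈ Ioc (0:ℝ) c
        · rw [Set.indicator_of_mem hx]
          apply le_antisymm
          · apply iSup_le; intro n
            by_cases hxn : x ∈ Ioc (c / (n+2)) c
            · rw [hfdef]; simp only; rw [Set.indicator_of_mem hxn]
            · rw [hfdef]; simp only; rw [Set.indicator_of_notMem hxn]; exact zero_le
          · obtain ⟨n, hn⟩ := exists_nat_gt (c / x)
            have hdx : c / x < (n:ℝ) + 2 := by linarith
            have hcx : c < x * ((n:ℝ) + 2) := by
              rw [div_lt_iff₀ hx.1] at hdx
              linarith [hdx]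
            have hxn : x ∈ Ioc (c / ((n:ℝ)+2)) c :=
              ⟨(div_lt_iff₀ (by positivity)).2 (by linarith), hx.2⟩
            calc ENNReal.ofReal (ℓ x) = f n x := by
                  rw [hfdef]; simp only; rw [Set.indicator_of_mem hxn]
              _ ≤ ⨆ m, f m x := le_iSup (fun m => f m x) n
        · rw [Set.indicator_of_notMem hx]
          apply le_antisymm _ zero_le
          apply iSup_le; intro n
          rw [hfdef]; simp only
          rw [Set.indicator_of_notMem]
          intro hxn
          exact hx ⟨lt_trans (by positivity) hxn.1, hxn.2⟩
      have hmct := lintegral_iSup' hfm hmono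
      have hL : (∫⁻ x, (⨆ n, f n x)) = ∫⁻ x in Ioc (0:ℝ) c, ENNReal.ofReal (ℓ x) := by
        rw [lintegral_congr hsup, lintegral_indicator measurableSet_Ioc]
      have hR : ∀ n : ℕ, (∫⁻ x, f n x) = ∫⁻ x in Ioc (c / (n+2)) c, ENNReal.ofReal (ℓ x) :=
        fun n => by rw [hfdef]; exact lintegral_indicator measurableSet_Ioc _
      have hfin : (∫⁻ x in Ioc (0:ℝ) c, ENNReal.ofReal (ℓ x)) ≤ ENNReal.ofReal (1/μ) := by
        rw [← hL, hmct]
        apply iSup_le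
        intro n
        rw [hR n]
        refine hb (c / (n+2)) (by positivity) (div_lt_self hcpos ?_)
        have : (0:ℝ) ≤ (n:ℝ) := Nat.cast_nonneg n
        linarith
      have hIntc : IntegrableOn ℓ (Ioc 0 c) := by
        constructor
        · exact hmℓ.aestronglyMeasurable.restrict
        · rw [hasFiniteIntegral_iff_ofReal (Filter.Eventually.of_forall fun x => hℓ0 x)]
          exact lt_of_le_of_lt hfin ENNReal.ofReal_lt_top
      exact F1 c hcpos hIntc


end Main

theorem stmt4 (ℓ ρ₁ ρ₂ : ℝ → ℝ) (μ : ℝ) (hμ : 0 < μ)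
    (hℓint : LocallyIntegrableOn ℓ (Ioi 0))
    (hℓ0 : ∀ t ∈ Ioi (0:ℝ), 0 ≤ ℓ t)
    (hℓmono : AntitoneOn ℓ (Ioi 0))
    (hρ₁0 : ρ₁ 0 = 1)
    (hρmono : AntitoneOn ρ₁ (Ici 0))
    (hρac : ∀ T > (0:ℝ), IntegrableOn (deriv ρ₁) (Ioc 0 T))
    (hvolt : ∀ t > (0:ℝ), ρ₁ t + μ * ∫ s in (0:ℝ)..t, ℓ (t - s) * ρ₁ s = 1)
    (hρ₂ : ∀ t, ρ₂ t = deriv (fun r => ∫ s in (0:ℝ)..r, ℓ (r - s) * ρ₁ s) t) :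
    ∀ t > (0:ℝ), ρ₂ t ≤ ℓ t * ρ₁ t := by
  intro t ht
  rw [hρ₂ t]
  classical
  set ℓ' : ℝ → ℝ := (Ioi 0).indicator ℓ with hℓ'def
  set ρ' : ℝ → ℝ := fun s => ρ₁ (max s 0) with hρ'def
  have hmono_max : ∀ c : ℝ, 0 < c → Antitone fun x : ℝ => ℓ (max x c) := by
    intro c hc a b hab
    exact hℓmono (mem_Ioi.2 (lt_of_lt_of_le hc (le_max_right a c)))
      (mem_Ioi.2 (lt_of_lt_of_le hc (le_max_right b c))) (max_le_max hab le_rfl)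
  have hmℓ' : Measurable ℓ' := by
    have hφm : ∀ n : ℕ, Measurable fun x : ℝ =>
        (Ioi (1/((n:ℝ)+1))).indicator (fun y => ℓ (max y (1/((n:ℝ)+1)))) x := fun n =>
      ((hmono_max _ (by positivity)).measurable).indicator measurableSet_Ioi
    apply measurable_of_tendsto_metrizable hφm
    rw [tendsto_pi_nhds]
    intro x
    by_cases hx : 0 < x
    · obtain ⟨N, hN⟩ := exists_nat_gt (1/x)
      have hconst : ∀ i ≥ N,
          (Ioi (1/((i:ℝ)+1))).indicator (fun y => ℓ (max y (1/((i:ℝ)+1)))) x = ℓ' x := by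
        intro i hi
        have hi' : (N:ℝ) ≤ i := Nat.cast_le.2 hi
        have h2 : 1 < (N:ℝ) * x := (div_lt_iff₀ hx).1 hN
        have h1 : 1/((i:ℝ)+1) < x := by
          rw [div_lt_iff₀ (by positivity)]
          nlinarith
        rw [Set.indicator_of_mem (mem_Ioi.2 h1), max_eq_left h1.le, hℓ'def,
          Set.indicator_of_mem (mem_Ioi.2 hx)]
      exact tendsto_atTop_of_eventually_const hconst
    · push_neg at hx
      have hz : ℓ' x = 0 := by
        rw [hℓ'def]
        exact Set.indicator_of_notMem (by simpa using not_lt.2 hx) ℓ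
      rw [hz]
      have hconst : ∀ i ≥ (0:ℕ),
          (Ioi (1/((i:ℝ)+1))).indicator (fun y => ℓ (max y (1/((i:ℝ)+1)))) x = 0 := by
        intro i _
        apply Set.indicator_of_notMem
        rw [mem_Ioi, not_lt]
        exact le_trans hx (by positivity)
      exact tendsto_atTop_of_eventually_const hconst
  have hℓ'zero : ∀ x ≤ (0:ℝ), ℓ' x = 0 := fun x hx => by
    rw [hℓ'def]; exact Set.indicator_of_notMem (by simpa using not_lt.2 hx) ℓ
  have hℓ'0 : ∀ x, 0 ≤ ℓ' x := fun x => Set.indicator_nonneg (fun y hy => hℓ0 y hy) x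
  have hℓ'mono : AntitoneOn ℓ' (Ioi 0) := by
    intro a ha b hb hab
    rw [hℓ'def]
    simp only [Set.indicator_of_mem ha, Set.indicator_of_mem hb]
    exact hℓmono ha hb hab
  have hρ' : Antitone ρ' := fun a b hab =>
    hρmono (mem_Ici.2 (le_max_right a 0)) (mem_Ici.2 (le_max_right b 0))
      (max_le_max hab le_rfl)
  have hρ'0 : ρ' 0 = 1 := by rw [hρ'def]; simp [hρ₁0]
  have heqint : ∀ r : ℝ, 0 < r →
      (∫ s in (0:ℝ)..r, ℓ' (r - s) * ρ' s) = ∫ s in (0:ℝ)..r, ℓ (r - s) * ρ₁ s := by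
    intro r hr
    apply my_integral_congr_Ioo hr.le
    intro x hx
    rw [hρ'def]
    simp only
    rw [max_eq_left hx.1.le, hℓ'def,
      Set.indicator_of_mem (mem_Ioi.2 (by linarith [hx.2] : (0:ℝ) < r - x))]
  have hvolt' : ∀ u > (0:ℝ), ρ' u + μ * ∫ s in (0:ℝ)..u, ℓ' (u - s) * ρ' s = 1 := by
    intro u hu
    rw [heqint u hu, hρ'def]
    simp only [max_eq_left hu.le]
    exact hvolt u hu
  have hmain : deriv (fun r => ∫ s in (0:ℝ)..r, ℓ' (r - s) * ρ' s) t ≤ ℓ' t * ρ' t := by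
    by_cases hA : IntegrableOn ℓ' (Ioc 0 1)
    · exact caseA hμ hℓ'zero hℓ'0 hℓ'mono hmℓ' hρ' hρ'0 hvolt' hA t ht
    · exact caseB hμ hℓ'zero hℓ'0 hℓ'mono hmℓ' hρ' hρ'0 hvolt' hA t ht
  have hde : deriv (fun r => ∫ s in (0:ℝ)..r, ℓ (r - s) * ρ₁ s) t
      = deriv (fun r => ∫ s in (0:ℝ)..r, ℓ' (r - s) * ρ' s) t := by
    apply Filter.EventuallyEq.deriv_eq
    apply eventuallyEq_of_mem (isOpen_Ioi.mem_nhds ht)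
    intro r hr
    exact (heqint r hr).symm
  rw [hde]
  refine le_trans hmain (le_of_eq ?_)
  rw [hℓ'def, hρ'def]
  simp only [Set.indicator_of_mem (mem_Ioi.2 ht), max_eq_left ht.le]
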